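/- arXiv:1403.6611 — 3 statements merged into one kernel-verified Lean document; each statement's English description precedes it below -/
import Mathlib

section
/- For tuples (a₁,…,a_r) and (b₁,…,b_r) of nodes of a perfect binary tree T, the characteristic tuples satisfy (a₁,…,a_r)* = (b₁,…,b_r)* if and only if there is an automorphism f of T with f(aᵢ) = bᵢ for all 1 ≤ i ≤ r. -/
/-- A perfect binary tree of depth `h` (levels `0,…,h-1`): nodes are binary
strings of length `< h`. -/
def PBT (h : ℕ) : Type := {l : List Bool // l.length < h}

/-- Depth of a node: its distance from the root. -/
def depth {h : ℕ} (a : PBT h) : ℕ := a.1.length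

/-- The edge (parent-child) relation of the perfect binary tree. -/
def edge {h : ℕ} (a b : PBT h) : Prop := ∃ x : Bool, b.1 = a.1 ++ [x]

/-- An automorphism of the perfect binary tree: an edge-preserving bijection. -/
structure Aut (h : ℕ) where
  toEquiv : PBT h ≃ PBT h
  edge_iff : ∀ a b : PBT h, edge a b ↔ edge (toEquiv a) (toEquiv b)

/-- An `r`-ary relation is invariant if `f[R] = R` for every automorphism `f`,
where `f` acts componentwise on tuples. -/
def Invariant {h r : ℕ} (R : Set (Fin r → PBT h)) : Prop :=
  ∀ f : Aut h, (fun t : Fin r → PBT h => fun i => f.toEquiv (t i)) '' R = R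

/-- Longest common prefix of two binary strings. -/
def lcp : List Bool → List Bool → List Bool
  | [], _ => []
  | _ :: _, [] => []
  | x :: xs, y :: ys => if x = y then x :: lcp xs ys else []

theorem lcp_length_le (l m : List Bool) : (lcp l m).length ≤ l.length := by
  induction l generalizing m with
  | nil => simp [lcp]
  | cons x xs ih =>
    cases m with
    | nil => simp [lcp]
    | cons y ys =>
      by_cases hxy : x = y
      · simpa [lcp, hxy] using ih ys
      · simp [lcp, hxy]

/-- The least common ancestor of two nodes of the perfect binary tree. -/
def lca {h : ℕ} (a b : PBT h) : PBT h :=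
  ⟨lcp a.1 b.1, lt_of_le_of_lt (lcp_length_le a.1 b.1) a.2⟩

/-- The characteristic tuple of a tuple of nodes: the depths of all components
and of all pairwise least common ancestors (the diagonal entry `(i,i)` is the
depth of the `i`-th component, since `aᵢ ⊼ aᵢ = aᵢ`). -/
def charTuple {h r : ℕ} (a : Fin r → PBT h) : Fin r → Fin r → ℕ :=
  fun i j => depth (lca (a i) (a j))

namespace CTaux

open List

/-! ### lcp lemmas -/

theorem lcp_self (l : List Bool) : lcp l l = l := by
  induction l with
  | nil => rfl
  | cons x xs ih => simp [lcp, ih]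

theorem lcp_prefix_left (l m : List Bool) : lcp l m <+: l := by
  induction l generalizing m with
  | nil => simp [lcp]
  | cons x xs ih =>
    cases m with
    | nil => simp [lcp]
    | cons y ys =>
      by_cases hxy : x = y
      · simp only [lcp, if_pos hxy]
        exact List.cons_prefix_cons.mpr ⟨rfl, ih ys⟩
      · simp [lcp, hxy]

theorem lcp_comm (l m : List Bool) : lcp l m = lcp m l := by
  induction l generalizing m with
  | nil => cases m <;> simp [lcp]
  | cons x xs ih =>
    cases m with
    | nil => simp [lcp]
    | cons y ys =>
      by_cases hxy : x = y
      · simp [lcp, hxy, ih ys]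
      · simp [lcp, hxy, Ne.symm hxy]

theorem lcp_prefix_right (l m : List Bool) : lcp l m <+: m := by
  rw [lcp_comm]; exact lcp_prefix_left m l

theorem prefix_lcp {p l m : List Bool} (hl : p <+: l) (hm : p <+: m) : p <+: lcp l m := by
  induction p generalizing l m with
  | nil => simp
  | cons x xs ih =>
    obtain ⟨s, rfl⟩ := hl
    obtain ⟨t, rfl⟩ := hm
    simpa [lcp] using ih (xs.prefix_append s) (xs.prefix_append t)

theorem lcp_get_ne {l m : List Bool} (hl : (lcp l m).length < l.length)
    (hm : (lcp l m).length < m.length) :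
    l[(lcp l m).length] ≠ m[(lcp l m).length] := by
  induction l generalizing m with
  | nil => simp at hl
  | cons x xs ih =>
    cases m with
    | nil => simp at hm
    | cons y ys =>
      by_cases hxy : x = y
      · have hl' : (lcp xs ys).length < xs.length := by simpa [lcp, hxy] using hl
        have hm' : (lcp xs ys).length < ys.length := by simpa [lcp, hxy] using hm
        simpa [lcp, hxy] using ih hl' hm'
      · simp [lcp, hxy]

/-! ### the twist transform -/

def tw (g : List Bool → Bool) : List Bool → List Bool → List Bool
  | _, [] => []
  | p, x :: xs => (xor x (g p)) :: tw g (p ++ [x]) xs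

@[simp] theorem tw_nil (g : List Bool → Bool) (p : List Bool) : tw g p [] = [] := rfl

@[simp] theorem tw_cons (g : List Bool → Bool) (p : List Bool) (x : Bool) (xs : List Bool) :
    tw g p (x :: xs) = (xor x (g p)) :: tw g (p ++ [x]) xs := rfl

@[simp] theorem tw_length (g : List Bool → Bool) (p l : List Bool) :
    (tw g p l).length = l.length := by
  induction l generalizing p with
  | nil => rfl
  | cons x xs ih => simp [ih]

theorem tw_append_singleton (g : List Bool → Bool) (p l : List Bool) (x : Bool) :
    tw g p (l ++ [x]) = tw g p l ++ [xor x (g (p ++ l))] := by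
  induction l generalizing p with
  | nil => simp
  | cons y ys ih => simp [ih, List.append_assoc]

theorem tw_injective (g : List Bool → Bool) (p : List Bool) :
    ∀ l m : List Bool, tw g p l = tw g p m → l = m := by
  intro l
  induction l generalizing p with
  | nil =>
    intro m hm
    cases m with
    | nil => rfl
    | cons y ys => simp at hm
  | cons x xs ih =>
    intro m hm
    cases m with
    | nil => simp at hm
    | cons y ys =>
      simp only [tw_cons, List.cons.injEq] at hm
      have hxy : x = y := by
        have := hm.1
        cases x <;> cases y <;> simp_all
      subst hxy
      exact congrArg (x :: ·) (ih (p ++ [x]) ys hm.2)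

end CTaux
namespace CTaux

instance PBT.finite (h : ℕ) : Finite (PBT h) := by
  have : Finite {l : List Bool // l.length < h} := (List.finite_length_lt (α := Bool) h).to_subtype
  exact this

theorem PBT.ext {h : ℕ} {x y : PBT h} (hxy : x.1 = y.1) : x = y := Subtype.ext hxy

theorem edge_depth {h : ℕ} {x y : PBT h} (e : edge x y) : depth y = depth x + 1 := by
  obtain ⟨t, ht⟩ := e
  simp [depth, ht]

/-- ancestor iff prefix -/
theorem rtg_of_prefix {h : ℕ} (x y : PBT h) (hp : x.1 <+: y.1) :
    Relation.ReflTransGen (edge (h := h)) x y := by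
  obtain ⟨s, hs⟩ := hp
  induction s using List.reverseRecOn generalizing y with
  | nil =>
    have : x = y := PBT.ext (by simp [← hs])
    exact this ▸ Relation.ReflTransGen.refl
  | append_singleton s t ih =>
    have hy : y.1 = (x.1 ++ s) ++ [t] := by rw [← hs, List.append_assoc]
    have hlen : (x.1 ++ s).length < h := by
      have : (x.1 ++ s).length < y.1.length := by simp [hy]
      exact this.trans y.2
    have hrtg := ih ⟨x.1 ++ s, hlen⟩ rfl
    exact hrtg.tail ⟨t, hy⟩

theorem prefix_of_rtg {h : ℕ} {x y : PBT h}
    (hr : Relation.ReflTransGen (edge (h := h)) x y) : x.1 <+: y.1 := by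
  induction hr with
  | refl => exact List.prefix_refl _
  | tail _ e ih => obtain ⟨t, ht⟩ := e; exact ih.trans (ht ▸ (List.prefix_append _ _))

/-- the inverse of an automorphism is an automorphism -/
def Aut.symm {h : ℕ} (f : Aut h) : Aut h where
  toEquiv := f.toEquiv.symm
  edge_iff := fun a b => by
    have := f.edge_iff (f.toEquiv.symm a) (f.toEquiv.symm b)
    simpa using this.symm

theorem aut_rtg {h : ℕ} (f : Aut h) {x y : PBT h}
    (hr : Relation.ReflTransGen (edge (h := h)) x y) :
    Relation.ReflTransGen (edge (h := h)) (f.toEquiv x) (f.toEquiv y) :=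
  Relation.ReflTransGen.lift f.toEquiv (fun a b e => (f.edge_iff a b).mp e) _ _ hr

theorem aut_root {h : ℕ} (f : Aut h) (root : PBT h) (hroot : root.1 = []) :
    f.toEquiv root = root := by
  apply PBT.ext
  rw [hroot]
  by_contra hne
  -- f root is a nonempty list, so it has a parent
  set y := f.toEquiv root with hy
  have hylen : y.1 ≠ [] := hne
  have hplen : y.1.dropLast.length < h := by
    have := y.2
    have h2 : y.1.dropLast.length ≤ y.1.length := by
      simp [List.length_dropLast]
    omega
  set p : PBT h := ⟨y.1.dropLast, hplen⟩ with hp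
  have hedge : edge p y := ⟨y.1.getLast hylen, by simp [hp, List.dropLast_append_getLast hylen]⟩
  -- pull back via f
  have hedge2 : edge (f.toEquiv.symm p) root := by
    rw [f.edge_iff]
    simpa using hedge
  obtain ⟨t, ht⟩ := hedge2
  rw [hroot] at ht
  exact List.not_mem_nil (a := t) (by rw [ht]; exact List.mem_append_right _ (List.mem_singleton_self t))

theorem aut_depth {h : ℕ} (f : Aut h) (x : PBT h) : depth (f.toEquiv x) = depth x := by
  obtain ⟨n, hn⟩ : ∃ n, depth x = n := ⟨_, rfl⟩
  induction n generalizing x with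
  | zero =>
    have hx : x.1 = [] := List.length_eq_zero_iff.mp hn
    rw [aut_root f x hx, hn]
  | succ n ih =>
    have hxne : x.1 ≠ [] := by
      intro h0; rw [depth] at hn; simp [h0] at hn
    have hplen : x.1.dropLast.length < h := by
      have := x.2
      have : x.1.dropLast.length ≤ x.1.length := by simp [List.length_dropLast]
      omega
    set p : PBT h := ⟨x.1.dropLast, hplen⟩ with hp
    have hpd : depth p = n := by
      simp only [depth, hp, List.length_dropLast]
      rw [depth] at hn; omega
    have hedge : edge p x := ⟨x.1.getLast hxne, by simp [hp, List.dropLast_append_getLast hxne]⟩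
    have := edge_depth ((f.edge_iff p x).mp hedge)
    rw [this, ih p hpd, hpd, hn]

theorem aut_lca_le {h : ℕ} (f : Aut h) (x y : PBT h) :
    depth (lca x y) ≤ depth (lca (f.toEquiv x) (f.toEquiv y)) := by
  set c := lca x y with hc
  have h1 : Relation.ReflTransGen (edge (h := h)) c x :=
    rtg_of_prefix c x (lcp_prefix_left x.1 y.1)
  have h2 : Relation.ReflTransGen (edge (h := h)) c y :=
    rtg_of_prefix c y (lcp_prefix_right x.1 y.1)
  have hpx := prefix_of_rtg (aut_rtg f h1)
  have hpy := prefix_of_rtg (aut_rtg f h2)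
  have := (prefix_lcp hpx hpy).length_le
  calc depth c = depth (f.toEquiv c) := (aut_depth f c).symm
    _ ≤ _ := this

theorem aut_lca_depth {h : ℕ} (f : Aut h) (x y : PBT h) :
    depth (lca (f.toEquiv x) (f.toEquiv y)) = depth (lca x y) := by
  refine le_antisymm ?_ (aut_lca_le f x y)
  have := aut_lca_le (Aut.symm f) (f.toEquiv x) (f.toEquiv y)
  simpa [Aut.symm] using this

end CTaux
namespace CTaux

theorem get_idx_congr {l : List Bool} {i j : ℕ} (hij : i = j) (hi : i < l.length) :
    l[i]'hi = l[j]'(hij ▸ hi) := by subst hij; rfl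

theorem bool_xor_helper : ∀ (p q u v : Bool), p ≠ q → u ≠ v → xor p u = xor q v := by decide

theorem xor_key {h : ℕ} {ai aj bi bj : PBT h}
    (hij : (lcp ai.1 aj.1).length = (lcp bi.1 bj.1).length)
    (hdi : ai.1.length = bi.1.length) (hdj : aj.1.length = bj.1.length)
    {k : ℕ} (hki : k < ai.1.length) (hkj : k < aj.1.length)
    (ht : ai.1.take k = aj.1.take k) :
    xor (ai.1[k]) (bi.1[k]'(hdi ▸ hki)) = xor (aj.1[k]) (bj.1[k]'(hdj ▸ hkj)) := by
  have hkle : k ≤ (lcp ai.1 aj.1).length := by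
    have h1 : ai.1.take k <+: ai.1 := List.take_prefix k ai.1
    have h2 : ai.1.take k <+: aj.1 := ht ▸ List.take_prefix k aj.1
    have := (prefix_lcp h1 h2).length_le
    rwa [List.length_take, min_eq_left hki.le] at this
  rcases lt_or_eq_of_le hkle with hlt | heq
  · -- strictly below the branching point: both sides agree coordinatewise
    have hltb : k < (lcp bi.1 bj.1).length := hij ▸ hlt
    have e1 : ai.1[k] = aj.1[k] := by
      rw [← (lcp_prefix_left ai.1 aj.1).getElem hlt, ← (lcp_prefix_right ai.1 aj.1).getElem hlt]
    have e2 : bi.1[k]'(hdi ▸ hki) = bj.1[k]'(hdj ▸ hkj) := by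
      rw [← (lcp_prefix_left bi.1 bj.1).getElem hltb, ← (lcp_prefix_right bi.1 bj.1).getElem hltb]
    rw [e1, e2]
  · -- at the branching point: both sides differ
    have ne1 : ai.1[k] ≠ aj.1[k] := by
      have := lcp_get_ne (l := ai.1) (m := aj.1) (heq ▸ hki) (heq ▸ hkj)
      rwa [get_idx_congr heq.symm, get_idx_congr heq.symm] at this
    have heqb : k = (lcp bi.1 bj.1).length := heq.trans hij
    have ne2 : bi.1[k]'(hdi ▸ hki) ≠ bj.1[k]'(hdj ▸ hkj) := by
      have := lcp_get_ne (l := bi.1) (m := bj.1) (heqb ▸ (hdi ▸ hki)) (heqb ▸ (hdj ▸ hkj))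
      rwa [get_idx_congr heqb.symm, get_idx_congr heqb.symm] at this
    exact bool_xor_helper _ _ _ _ ne1 ne2

theorem xor_key' {h : ℕ} {ai aj bi bj : PBT h}
    (hij : (lcp ai.1 aj.1).length = (lcp bi.1 bj.1).length)
    (hdi : ai.1.length = bi.1.length) (hdj : aj.1.length = bj.1.length)
    {k : ℕ} (hki : k < ai.1.length) (hkj : k < aj.1.length)
    (ht : ai.1.take k = aj.1.take k) :
    xor (ai.1.getD k false) (bi.1.getD k false) = xor (aj.1.getD k false) (bj.1.getD k false) := by
  rw [List.getD_eq_getElem ai.1 false hki, List.getD_eq_getElem bi.1 false (hdi ▸ hki),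
    List.getD_eq_getElem aj.1 false hkj, List.getD_eq_getElem bj.1 false (hdj ▸ hkj)]
  exact xor_key hij hdi hdj hki hkj ht

/-- The swap-flag function built from the two tuples. -/
def gfun {h r : ℕ} (a b : Fin r → PBT h) : List Bool → Bool :=
  fun p =>
    decide (∃ i : Fin r, p.length < (a i).1.length ∧ (a i).1.take p.length = p ∧
      xor ((a i).1.getD p.length false) ((b i).1.getD p.length false) = true)

theorem gfun_spec {h r : ℕ} {a b : Fin r → PBT h}
    (hlen : ∀ i j : Fin r, (lcp (a i).1 (a j).1).length = (lcp (b i).1 (b j).1).length)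
    (hdep : ∀ i : Fin r, (a i).1.length = (b i).1.length)
    (i : Fin r) {k : ℕ} (hk : k < (a i).1.length) :
    gfun a b ((a i).1.take k) = xor ((a i).1.getD k false) ((b i).1.getD k false) := by
  have plen : ((a i).1.take k).length = k := by
    rw [List.length_take, min_eq_left hk.le]
  rw [gfun]
  cases hv : xor ((a i).1.getD k false) ((b i).1.getD k false) with
  | true =>
    apply decide_eq_true
    exact ⟨i, by rw [plen]; exact ⟨hk, rfl, hv⟩⟩
  | false =>
    apply decide_eq_false
    rintro ⟨j, h1, h2, h3⟩
    rw [plen] at h1 h2 h3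
    have := xor_key' (hlen j i) (hdep j) (hdep i) h1 hk h2
    rw [h3, hv] at this
    exact Bool.true_eq_false.mp this

end CTaux
namespace CTaux

theorem bool_xor_cancel : ∀ x y : Bool, xor x (xor x y) = y := by decide
theorem bool_xor_cancel' : ∀ x y : Bool, xor (xor x y) y = x := by decide

theorem tw_maps {h r : ℕ} {a b : Fin r → PBT h}
    (hlen : ∀ i j : Fin r, (lcp (a i).1 (a j).1).length = (lcp (b i).1 (b j).1).length)
    (hdep : ∀ i : Fin r, (a i).1.length = (b i).1.length) (i : Fin r) :
    ∀ d k : ℕ, k + d = (a i).1.length →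
      tw (gfun a b) ((a i).1.take k) ((a i).1.drop k) = (b i).1.drop k := by
  intro d
  induction d with
  | zero =>
    intro k hk
    have h1 : (a i).1.drop k = [] := List.drop_eq_nil_of_le (by omega)
    have h2 : (b i).1.drop k = [] := List.drop_eq_nil_of_le (by rw [← hdep i]; omega)
    rw [h1, h2, tw_nil]
  | succ d ih =>
    intro k hk
    have hka : k < (a i).1.length := by omega
    have hkb : k < (b i).1.length := hdep i ▸ hka
    rw [List.drop_eq_getElem_cons hka, List.drop_eq_getElem_cons hkb, tw_cons]
    have hpre : (a i).1.take k ++ [(a i).1[k]] = (a i).1.take (k + 1) := by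
      simpa [List.concat_eq_append] using List.take_concat_get (a i).1 k hka
    have hg : xor ((a i).1[k]) (gfun a b ((a i).1.take k)) = (b i).1[k] := by
      rw [gfun_spec hlen hdep i hka, List.getD_eq_getElem (a i).1 false hka,
        List.getD_eq_getElem (b i).1 false hkb]
      exact bool_xor_cancel _ _
    rw [hg, hpre, ih (k + 1) (by omega)]

end CTaux

open CTaux in
theorem charTuple_eq_iff_aut' {h r : ℕ} (a b : Fin r → PBT h) :
    charTuple a = charTuple b ↔ ∃ f : Aut h, ∀ i, f.toEquiv (a i) = b i := by
  constructor
  · intro hct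
    have hlen : ∀ i j : Fin r, (lcp (a i).1 (a j).1).length = (lcp (b i).1 (b j).1).length :=
      fun i j => congrFun (congrFun hct i) j
    have hdep : ∀ i : Fin r, (a i).1.length = (b i).1.length := by
      intro i
      have := hlen i i
      rwa [lcp_self, lcp_self] at this
    set g := gfun a b with hg
    set F : PBT h → PBT h := fun x => ⟨tw g [] x.1, by rw [tw_length]; exact x.2⟩ with hF
    have Finj : Function.Injective F := by
      intro x y hxy
      exact PBT.ext (tw_injective g [] _ _ (congrArg Subtype.val hxy))
    have Fbij : Function.Bijective F := Finite.injective_iff_bijective.mp Finj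
    set e : PBT h ≃ PBT h := Equiv.ofBijective F Fbij with he
    have heF : ∀ x, (e x).1 = tw g [] x.1 := fun x => rfl
    have hedge : ∀ x y : PBT h, edge x y ↔ edge (e x) (e y) := by
      intro x y
      constructor
      · rintro ⟨t, ht⟩
        refine ⟨xor t (g x.1), ?_⟩
        rw [heF, heF, ht, tw_append_singleton, List.nil_append]
      · rintro ⟨t, ht⟩
        rw [heF, heF] at ht
        have hylen : y.1.length = x.1.length + 1 := by
          have := congrArg List.length ht
          simp at this ⊢; exact this
        have hclen : (x.1 ++ [xor t (g x.1)]).length < h := by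
          have := y.2
          simp only [List.length_append, List.length_singleton]
          omega
        have hc : tw g [] (x.1 ++ [xor t (g x.1)]) = tw g [] y.1 := by
          rw [tw_append_singleton, List.nil_append, bool_xor_cancel', ht]
        have := tw_injective g [] _ _ hc
        exact ⟨xor t (g x.1), this.symm⟩
    refine ⟨⟨e, hedge⟩, fun i => ?_⟩
    apply PBT.ext
    rw [heF]
    have := tw_maps hlen hdep i (a i).1.length 0 (by omega)
    simpa using this
  · rintro ⟨f, hf⟩
    funext i j
    show depth (lca (a i) (a j)) = depth (lca (b i) (b j))
    rw [← hf i, ← hf j, aut_lca_depth]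

/-- Two tuples of nodes have equal characteristic tuples iff some automorphism
of the tree maps one to the other. -/
theorem charTuple_eq_iff_aut {h r : ℕ} (a b : Fin r → PBT h) :
    charTuple a = charTuple b ↔ ∃ f : Aut h, ∀ i, f.toEquiv (a i) = b i := by
  exact charTuple_eq_iff_aut' a b
end

section
/- For two r-ary invariant relations R₁ and R₂ on a perfect binary tree T, R₁ = R₂ if and only if their characteristic relations are equal: R₁* = R₂*. -/
/-! ### Auxiliary development -/

def tw (e : List Bool → Bool) : List Bool → List Bool → List Bool
  | _, [] => []
  | p, x :: xs => (xor x (e p)) :: tw e (p ++ [x]) xs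

def tw' (e : List Bool → Bool) : List Bool → List Bool → List Bool
  | _, [] => []
  | p, y :: ys => (xor y (e p)) :: tw' e (p ++ [xor y (e p)]) ys

theorem tw_length (e : List Bool → Bool) (p l : List Bool) :
    (tw e p l).length = l.length := by
  induction l generalizing p with
  | nil => simp [tw]
  | cons x xs ih => simp [tw, ih]

theorem tw'_length (e : List Bool → Bool) (p l : List Bool) :
    (tw' e p l).length = l.length := by
  induction l generalizing p with
  | nil => simp [tw']
  | cons x xs ih => simp [tw', ih]

theorem tw'_tw (e : List Bool → Bool) (p l : List Bool) :
    tw' e p (tw e p l) = l := by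
  induction l generalizing p with
  | nil => simp [tw, tw']
  | cons x xs ih => simp [tw, tw', Bool.xor_assoc, ih]

theorem tw_tw' (e : List Bool → Bool) (p l : List Bool) :
    tw e p (tw' e p l) = l := by
  induction l generalizing p with
  | nil => simp [tw, tw']
  | cons x xs ih => simp [tw, tw', Bool.xor_assoc, ih]

theorem tw_append (e : List Bool → Bool) (p l : List Bool) (x : Bool) :
    tw e p (l ++ [x]) = tw e p l ++ [xor x (e (p ++ l))] := by
  induction l generalizing p with
  | nil => simp [tw]
  | cons y ys ih => simp [tw, ih]

theorem tw'_append (e : List Bool → Bool) (p l : List Bool) (x : Bool) :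
    tw' e p (l ++ [x]) = tw' e p l ++ [xor x (e (p ++ tw' e p l))] := by
  induction l generalizing p with
  | nil => simp [tw']
  | cons y ys ih => simp [tw', ih]

theorem lcp_prefix_left (l m : List Bool) : lcp l m <+: l := by
  induction l generalizing m with
  | nil => simp [lcp]
  | cons x xs ih =>
    cases m with
    | nil => simp [lcp]
    | cons y ys =>
      by_cases hxy : x = y
      · simpa [lcp, hxy] using ih ys
      · simp [lcp, hxy]

theorem lcp_prefix_right (l m : List Bool) : lcp l m <+: m := by
  induction l generalizing m with
  | nil => simp [lcp]
  | cons x xs ih =>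
    cases m with
    | nil => simp [lcp]
    | cons y ys =>
      by_cases hxy : x = y
      · subst hxy; simpa [lcp] using ih ys
      · simp [lcp, hxy]

theorem prefix_lcp {p l m : List Bool} (hl : p <+: l) (hm : p <+: m) : p <+: lcp l m := by
  induction p generalizing l m with
  | nil => exact List.nil_prefix
  | cons x xs ih =>
    obtain ⟨l', rfl⟩ := hl
    obtain ⟨m', hm'⟩ := hm
    cases m with
    | nil => simp at hm'
    | cons y ys =>
      simp only [List.cons_append, List.cons.injEq] at hm'
      obtain ⟨rfl, hys⟩ := hm'
      subst hys
      simp only [lcp, List.cons_append, if_pos rfl]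
      obtain ⟨t, ht⟩ := ih (List.prefix_append xs l') (List.prefix_append xs m')
      exact ⟨t, by simp [← ht]⟩

theorem lcp_self (l : List Bool) : lcp l l = l := by
  induction l with
  | nil => rfl
  | cons x xs ih => simp [lcp, ih]

theorem take_succ_getD (l : List Bool) (k : ℕ) (hk : k < l.length) :
    l.take (k + 1) = l.take k ++ [l.getD k false] := by
  rw [List.take_succ]
  congr 1
  simp [List.getD, List.getElem?_eq_getElem hk, Option.toList]

theorem getD_eq_of_prefix {p l : List Bool} (h : p <+: l) {k : ℕ} (hk : k < p.length) :
    l.getD k false = p.getD k false := by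
  rw [List.getD_eq_getElem l false (lt_of_lt_of_le hk h.length_le),
    List.getD_eq_getElem p false hk, h.getElem hk]

theorem lcp_getD_eq {l m : List Bool} {k : ℕ} (hk : k < (lcp l m).length) :
    l.getD k false = m.getD k false := by
  rw [getD_eq_of_prefix (lcp_prefix_left l m) hk, getD_eq_of_prefix (lcp_prefix_right l m) hk]

theorem lcp_getD_ne {l m : List Bool} (hl : (lcp l m).length < l.length)
    (hm : (lcp l m).length < m.length) :
    l.getD (lcp l m).length false ≠ m.getD (lcp l m).length false := by
  intro heq
  have h1 : l.take (lcp l m).length = lcp l m :=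
    (List.prefix_iff_eq_take.mp (lcp_prefix_left l m)).symm
  have h2 : m.take (lcp l m).length = lcp l m :=
    (List.prefix_iff_eq_take.mp (lcp_prefix_right l m)).symm
  have h3 : l.take ((lcp l m).length + 1) = m.take ((lcp l m).length + 1) := by
    rw [take_succ_getD l _ hl, take_succ_getD m _ hm, h1, h2, heq]
  have h4 : l.take ((lcp l m).length + 1) <+: lcp l m :=
    prefix_lcp (List.take_prefix _ _) (h3 ▸ List.take_prefix _ _)
  have h5 := h4.length_le
  simp [List.length_take] at h5
  omega

/-- The automorphism induced by a family of child-swaps `e`. -/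
def twAut (h : ℕ) (e : List Bool → Bool) : Aut h where
  toEquiv :=
    { toFun := fun a => ⟨tw e [] a.1, by rw [tw_length]; exact a.2⟩
      invFun := fun a => ⟨tw' e [] a.1, by rw [tw'_length]; exact a.2⟩
      left_inv := fun a => Subtype.ext (tw'_tw e [] a.1)
      right_inv := fun a => Subtype.ext (tw_tw' e [] a.1) }
  edge_iff := by
    intro a b
    constructor
    · rintro ⟨x, hx⟩
      exact ⟨xor x (e ([] ++ a.1)), by change tw e [] b.1 = tw e [] a.1 ++ _; rw [hx, tw_append]⟩
    · rintro ⟨x, hx⟩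
      change tw e [] b.1 = tw e [] a.1 ++ [x] at hx
      have h2 := congrArg (tw' e []) hx
      rw [tw'_tw, tw'_append, tw'_tw] at h2
      exact ⟨_, h2⟩

/-- The swap family used to map the tuple `a` onto the tuple `b`. -/
noncomputable def ebit {h r : ℕ} (a b : Fin r → PBT h) : List Bool → Bool := fun p =>
  if hx : ∃ i, p <+: (a i).1 ∧ p.length < (a i).1.length then
    xor ((a hx.choose).1.getD p.length false) ((b hx.choose).1.getD p.length false)
  else false

theorem exists_aut {h r : ℕ} (a b : Fin r → PBT h) (hab : charTuple a = charTuple b) :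
    ∃ f : Aut h, ∀ i, f.toEquiv (a i) = b i := by
  have hC : ∀ i j, (lcp (a i).1 (a j).1).length = (lcp (b i).1 (b j).1).length := by
    intro i j
    exact congrFun (congrFun hab i) j
  have hlen : ∀ i, (a i).1.length = (b i).1.length := by
    intro i
    have := hC i i
    rwa [lcp_self, lcp_self] at this
  -- well-definedness of `ebit`
  have hwd : ∀ (p : List Bool) (i j : Fin r), p <+: (a i).1 → p.length < (a i).1.length →
      p <+: (a j).1 → p.length < (a j).1.length →
      xor ((a i).1.getD p.length false) ((b i).1.getD p.length false)
        = xor ((a j).1.getD p.length false) ((b j).1.getD p.length false) := by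
    intro p i j hpi hli hpj hlj
    have hpl : p <+: lcp (a i).1 (a j).1 := prefix_lcp hpi hpj
    rcases lt_or_eq_of_le hpl.length_le with hlt | heq
    · have h1 : (a i).1.getD p.length false = (a j).1.getD p.length false := lcp_getD_eq hlt
      have hlt' : p.length < (lcp (b i).1 (b j).1).length := by rw [← hC i j]; exact hlt
      have h2 : (b i).1.getD p.length false = (b j).1.getD p.length false := lcp_getD_eq hlt'
      rw [h1, h2]
    · have hne1 : (a i).1.getD p.length false ≠ (a j).1.getD p.length false := by
        rw [heq]; exact lcp_getD_ne (heq ▸ hli) (heq ▸ hlj)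
      have hne2 : (b i).1.getD p.length false ≠ (b j).1.getD p.length false := by
        have heq' : p.length = (lcp (b i).1 (b j).1).length := by rw [heq, hC i j]
        rw [heq']
        exact lcp_getD_ne (heq' ▸ (hlen i ▸ hli)) (heq' ▸ (hlen j ▸ hlj))
      revert hne1 hne2
      cases ((a i).1.getD p.length false) <;> cases ((a j).1.getD p.length false) <;>
        cases ((b i).1.getD p.length false) <;> cases ((b j).1.getD p.length false) <;>
        simp
  have hkey : ∀ (k : ℕ) (i : Fin r), k ≤ (a i).1.length →
      tw (ebit a b) [] ((a i).1.take k) = (b i).1.take k := by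
    intro k
    induction k with
    | zero => intro i _; simp [tw]
    | succ k ih =>
      intro i hk
      have hk' : k < (a i).1.length := hk
      have hkb : k < (b i).1.length := hlen i ▸ hk'
      rw [take_succ_getD _ _ hk', tw_append, ih i (le_of_lt hk'), List.nil_append]
      have hpre : (a i).1.take k <+: (a i).1 := List.take_prefix _ _
      have hlenk : ((a i).1.take k).length = k := by
        simp [List.length_take]; omega
      have hex : ∃ j, (a i).1.take k <+: (a j).1 ∧ ((a i).1.take k).length < (a j).1.length :=
        ⟨i, hpre, by rw [hlenk]; exact hk'⟩
      have he : ebit a b ((a i).1.take k)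
          = xor ((a i).1.getD k false) ((b i).1.getD k false) := by
        simp only [ebit]
        rw [dif_pos hex]
        have := hwd ((a i).1.take k) hex.choose i hex.choose_spec.1 hex.choose_spec.2 hpre
          (by rw [hlenk]; exact hk')
        rw [this, hlenk]
      rw [he, ← Bool.xor_assoc, Bool.xor_self, Bool.false_xor, ← take_succ_getD _ _ hkb]
  refine ⟨twAut h (ebit a b), fun i => Subtype.ext ?_⟩
  have := hkey (a i).1.length i le_rfl
  rw [List.take_length, hlen i, List.take_length] at this
  exact this

/-- Two invariant relations are equal iff their characteristic relations
`R* = {(a₁,…,a_r)* | (a₁,…,a_r) ∈ R}` are equal. -/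
theorem invariant_eq_iff_char_eq {h r : ℕ} (R₁ R₂ : Set (Fin r → PBT h))
    (h₁ : Invariant R₁) (h₂ : Invariant R₂) :
    R₁ = R₂ ↔ charTuple '' R₁ = charTuple '' R₂ := by
  have sub : ∀ (S₁ S₂ : Set (Fin r → PBT h)), Invariant S₂ →
      charTuple '' S₁ ⊆ charTuple '' S₂ → S₁ ⊆ S₂ := by
    intro S₁ S₂ hS₂ hsub t ht
    obtain ⟨s, hs, hst⟩ := hsub ⟨t, ht, rfl⟩
    obtain ⟨f, hf⟩ := exists_aut s t hst
    rw [← hS₂ f]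
    exact ⟨s, hs, funext hf⟩
  constructor
  · rintro rfl; rfl
  · intro hc
    exact le_antisymm (sub R₁ R₂ h₂ hc.le) (sub R₂ R₁ h₁ hc.ge)
end

section
/- The class K' of structures defined from a class K is closed under substructures: if G ∈ K' and H is a substructure of G, then H ∈ K'. Specifically: take G satisfying the structural assumptions; if G satisfies Condition 2 (the depth of its largest perfect binary subtree rooted at root is less than h + h^c), then every substructure also satisfies Condition 2; if G satisfies Condition 1, then for each substructure H either T(H) = T(G) (and H satisfies Condition 1) or the depth of T(H) is strictly smaller (and H satisfies Condition 2). -/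
/-- A structure of the vocabulary `τ' = τ ∪ {root, E, P}`, where `τ` consists
of relation symbols `R i` of arity `ar i` for `i : Fin k`. -/
structure Str (k : ℕ) (ar : Fin k → ℕ) where
  V : Type
  root : V
  E : V → V → Prop
  P : V → Prop
  R : ∀ i : Fin k, (Fin (ar i) → V) → Prop

/-- `H` is a substructure of `G`: `H` is (isomorphic to) the structure induced
by `G` on a subset of its vertices containing the root. -/
def IsSubstructure {k : ℕ} {ar : Fin k → ℕ} (H G : Str k ar) : Prop :=
  ∃ e : H.V ↪ G.V, e H.root = G.root ∧
    (∀ a b, H.E a b ↔ G.E (e a) (e b)) ∧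
    (∀ a, H.P a ↔ G.P (e a)) ∧
    (∀ i t, H.R i t ↔ G.R i (fun j => e (t j)))

/-- An embedding of the perfect binary tree with `n` levels (nodes are binary
strings of length `< n`) into `G`, rooted at the root of `G` and following the
edges of `G`.  The largest perfect binary subtree `T(G)` of `G` rooted at
`root` has depth `n` iff such an embedding exists for `n` but not for `n+1`. -/
structure PerfEmb {k : ℕ} {ar : Fin k → ℕ} (G : Str k ar) (n : ℕ) where
  φ : List Bool → G.V
  root_eq : φ [] = G.root
  inj : Set.InjOn φ {l : List Bool | l.length < n}
  edge : ∀ (l : List Bool) (x : Bool), l.length + 1 < n → G.E (φ l) (φ (l ++ [x]))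

/-- The structural assumptions on the `τ'`-structures considered: `(V, E)` is a
directed acyclic graph, the nodes reachable from the root form a binary tree,
and `P` and all the relations `R i`, restricted to the largest perfect binary
subtree `T(G)`, are saturated (membership depends only on the depths). -/
def Good {k : ℕ} {ar : Fin k → ℕ} (G : Str k ar) : Prop :=
  (∀ a : G.V, ¬ Relation.TransGen G.E a a) ∧
  (∀ a : G.V, Relation.ReflTransGen G.E G.root a → a ≠ G.root →
      ∃! p : G.V, Relation.ReflTransGen G.E G.root p ∧ G.E p a) ∧
  (∀ a : G.V, ¬ G.E a G.root) ∧
  (∀ a b c d : G.V, G.E a b → G.E a c → G.E a d → b = c ∨ b = d ∨ c = d) ∧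
  (∀ n : ℕ, ¬ Nonempty (PerfEmb G (n + 1)) → ∀ ψ : PerfEmb G n,
    (∀ l m : List Bool, l.length < n → m.length < n → l.length = m.length →
        (G.P (ψ.φ l) ↔ G.P (ψ.φ m))) ∧
    (∀ (i : Fin k) (t s : Fin (ar i) → List Bool),
        (∀ j, (t j).length < n) → (∀ j, (s j).length < n) →
        (∀ j, (t j).length = (s j).length) →
        (G.R i (fun j => ψ.φ (t j)) ↔ G.R i (fun j => ψ.φ (s j)))))

/-- All nodes in the first `hh` levels of the tree are marked by `P`. -/
def AllP {k : ℕ} {ar : Fin k → ℕ} {G : Str k ar} {n : ℕ} (ψ : PerfEmb G n)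
    (hh : ℕ) : Prop :=
  ∀ l : List Bool, l.length < hh → G.P (ψ.φ l)

/-- Condition 1: `T(G)` has depth `h + h^c` where all nodes in the first `h`
levels are marked by `P`, no node in the last `h^c` levels is marked by `P`,
no tuple involving a node of the last `h^c` levels belongs to any `R i`, and
the `τ`-structure `C⁻¹(T_h(G))` decoded from the first `h` levels (whose
domain is `{0,…,h-1}` and where `R i` holds of a tuple of numbers iff it holds
of some tuple of nodes of those depths) belongs to `K`. -/
def Cond1 (c : ℕ) {k : ℕ} {ar : Fin k → ℕ}
    (K : (hh : ℕ) → (∀ i : Fin k, (Fin (ar i) → ℕ) → Prop) → Prop)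
    (G : Str k ar) : Prop :=
  ∃ (n hh : ℕ) (ψ : PerfEmb G n), ¬ Nonempty (PerfEmb G (n + 1)) ∧
    n = hh + hh ^ c ∧
    AllP ψ hh ∧
    (∀ l : List Bool, hh ≤ l.length → l.length < n → ¬ G.P (ψ.φ l)) ∧
    (∀ (i : Fin k) (t : Fin (ar i) → List Bool), (∀ j, (t j).length < n) →
        (∃ j, hh ≤ (t j).length) → ¬ G.R i (fun j => ψ.φ (t j))) ∧
    K hh (fun i m => (∀ j, m j < hh) ∧ ∃ t : Fin (ar i) → List Bool,
        (∀ j, (t j).length = m j) ∧ G.R i (fun j => ψ.φ (t j)))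

/-- Condition 2: the depth of `T(G)` is less than `h + h^c`, where `h` is the
largest number such that all nodes in the first `h` levels are marked `P`. -/
def Cond2 (c : ℕ) {k : ℕ} {ar : Fin k → ℕ} (G : Str k ar) : Prop :=
  ∃ (n : ℕ) (ψ : PerfEmb G n), ¬ Nonempty (PerfEmb G (n + 1)) ∧
    ∃ hh : ℕ, hh ≤ n ∧ AllP ψ hh ∧
      (∀ h' : ℕ, h' ≤ n → AllP ψ h' → h' ≤ hh) ∧ n < hh + hh ^ c

/-- `G ∈ K'` iff Condition 1 or Condition 2 holds. -/
def MemK' (c : ℕ) {k : ℕ} {ar : Fin k → ℕ}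
    (K : (hh : ℕ) → (∀ i : Fin k, (Fin (ar i) → ℕ) → Prop) → Prop)
    (G : Str k ar) : Prop :=
  Cond1 c K G ∨ Cond2 c G

section Aux

variable {k : ℕ} {ar : Fin k → ℕ}

/-- The trivial embedding of depth 1 (just the root) always exists. -/
lemma perfEmb_one (G : Str k ar) : Nonempty (PerfEmb G 1) := by
  refine ⟨⟨fun _ => G.root, rfl, ?_, ?_⟩⟩
  · intro a ha b hb _
    have ha' : a = [] := List.length_eq_zero_iff.mp (Nat.lt_one_iff.mp ha)
    have hb' : b = [] := List.length_eq_zero_iff.mp (Nat.lt_one_iff.mp hb)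
    rw [ha', hb']
  · intro l x h
    omega

/-- Restriction of a perfect embedding to a smaller depth. -/
def PerfEmb.restrict {G : Str k ar} {n m : ℕ} (h : m ≤ n) (ψ : PerfEmb G n) :
    PerfEmb G m :=
  ⟨ψ.φ, ψ.root_eq, ψ.inj.mono (fun l hl => lt_of_lt_of_le hl h),
    fun l x hl => ψ.edge l x (lt_of_lt_of_le hl h)⟩

/-- Pushforward of a perfect embedding along a substructure embedding. -/
def PerfEmb.map {H G : Str k ar} (e : H.V ↪ G.V) (heroot : e H.root = G.root)
    (heE : ∀ a b, H.E a b ↔ G.E (e a) (e b)) {n : ℕ} (ψ : PerfEmb H n) :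
    PerfEmb G n :=
  ⟨fun l => e (ψ.φ l), by show e (ψ.φ []) = G.root; rw [ψ.root_eq, heroot],
    fun a ha b hb hab => ψ.inj ha hb (e.injective hab),
    fun l x h => (heE _ _).mp (ψ.edge l x h)⟩

/-- Any two perfect embeddings of `G` hit the same nodes, level by level. -/
lemma exists_same_level {G : Str k ar}
    (hdeg : ∀ a b c d : G.V, G.E a b → G.E a c → G.E a d → b = c ∨ b = d ∨ c = d)
    {m1 m2 : ℕ} (ψ1 : PerfEmb G m1) (ψ2 : PerfEmb G m2) :
    ∀ l : List Bool, l.length < m1 → l.length < m2 →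
      ∃ l', l'.length = l.length ∧ ψ2.φ l' = ψ1.φ l := by
  intro l
  induction l using List.reverseRecOn with
  | nil =>
    intro _ _
    exact ⟨[], rfl, ψ2.root_eq.trans ψ1.root_eq.symm⟩
  | append_singleton l x ih =>
    intro h1 h2
    rw [List.length_append, List.length_singleton] at h1 h2
    obtain ⟨l', hlen, heq⟩ := ih (by omega) (by omega)
    have e1 : G.E (ψ1.φ l) (ψ1.φ (l ++ [x])) := ψ1.edge l x h1
    have e1' : G.E (ψ2.φ l') (ψ1.φ (l ++ [x])) := by rwa [heq]
    have ef : G.E (ψ2.φ l') (ψ2.φ (l' ++ [false])) := ψ2.edge l' false (by omega)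
    have et : G.E (ψ2.φ l') (ψ2.φ (l' ++ [true])) := ψ2.edge l' true (by omega)
    have hne : ψ2.φ (l' ++ [false]) ≠ ψ2.φ (l' ++ [true]) := by
      intro h
      have := ψ2.inj
        (show (l' ++ [false]) ∈ {l : List Bool | l.length < m2} by
          simp only [Set.mem_setOf_eq, List.length_append, List.length_singleton]; omega)
        (show (l' ++ [true]) ∈ {l : List Bool | l.length < m2} by
          simp only [Set.mem_setOf_eq, List.length_append, List.length_singleton]; omega) h
      simp at this
    rcases hdeg _ _ _ _ e1' ef et with h | h | h
    · exact ⟨l' ++ [false], by simp [hlen], h.symm⟩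
    · exact ⟨l' ++ [true], by simp [hlen], h.symm⟩
    · exact absurd h hne

/-- Setup: from a maximal perfect embedding of `G` and a substructure `H`,
obtain a maximal perfect embedding of `H` together with the level
correspondences between the two trees. -/
lemma sub_setup {H G : Str k ar} (e : H.V ↪ G.V) (heroot : e H.root = G.root)
    (heE : ∀ a b, H.E a b ↔ G.E (e a) (e b))
    (hdeg : ∀ a b c d : G.V, G.E a b → G.E a c → G.E a d → b = c ∨ b = d ∨ c = d)
    {nG : ℕ} (ψG : PerfEmb G nG) (hmax : ¬ Nonempty (PerfEmb G (nG + 1))) :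
    ∃ (nH : ℕ) (ψH : PerfEmb H nH), ¬ Nonempty (PerfEmb H (nH + 1)) ∧
      1 ≤ nH ∧ nH ≤ nG ∧
      (∀ l : List Bool, l.length < nH →
        ∃ l', l'.length = l.length ∧ ψG.φ l' = e (ψH.φ l)) ∧
      (∀ l : List Bool, l.length < nH →
        ∃ l', l'.length = l.length ∧ e (ψH.φ l') = ψG.φ l) := by
  classical
  have hnG1 : 1 ≤ nG := by
    by_contra h
    have h0 : nG = 0 := by omega
    exact hmax (h0 ▸ perfEmb_one G)
  have hHle : ∀ n, Nonempty (PerfEmb H n) → n ≤ nG := by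
    rintro n ⟨ψ⟩
    by_contra h
    exact hmax ⟨(ψ.map e heroot heE).restrict (by omega)⟩
  set P' : ℕ → Prop := fun n => Nonempty (PerfEmb H n) with hP'
  have hP1 : P' 1 := perfEmb_one H
  have hnH1 : 1 ≤ Nat.findGreatest P' nG := Nat.le_findGreatest hnG1 hP1
  have hspec : P' (Nat.findGreatest P' nG) := Nat.findGreatest_spec hnG1 hP1
  have hnHle : Nat.findGreatest P' nG ≤ nG := Nat.findGreatest_le nG
  set nH := Nat.findGreatest P' nG with hnH
  have hnot : ¬ Nonempty (PerfEmb H (nH + 1)) := by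
    intro hne
    have hle : nH + 1 ≤ nG := hHle _ hne
    exact Nat.findGreatest_is_greatest (Nat.lt_succ_self nH) hle hne
  obtain ⟨ψH⟩ := hspec
  refine ⟨nH, ψH, hnot, hnH1, hnHle, ?_, ?_⟩
  · intro l hl
    exact exists_same_level hdeg (ψH.map e heroot heE) ψG l hl (lt_of_lt_of_le hl hnHle)
  · intro l hl
    exact exists_same_level hdeg ψG (ψH.map e heroot heE) l (lt_of_lt_of_le hl hnHle) hl

/-- A sufficient criterion for Condition 2 in terms of the level-wise
`P`-pattern of the tree. -/
lemma cond2_of (c : ℕ) (H : Str k ar) (nH : ℕ) (ψH : PerfEmb H nH)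
    (hnot : ¬ Nonempty (PerfEmb H (nH + 1))) (h1 : 1 ≤ nH) (hb : ℕ)
    (levelP : ℕ → Prop)
    (hchar : ∀ l : List Bool, l.length < nH → (H.P (ψH.φ l) ↔ levelP l.length))
    (hlow : ∀ d, d < hb → levelP d)
    (hhigh : hb < nH → ¬ levelP hb)
    (hbound : hb < nH → nH < hb + hb ^ c) : Cond2 c H := by
  rcases le_or_gt nH hb with hle | hlt
  · refine ⟨nH, ψH, hnot, nH, le_refl _, ?_, fun h' hh' _ => hh', ?_⟩
    · intro l hl
      exact (hchar l hl).mpr (hlow _ (lt_of_lt_of_le hl hle))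
    · have : 0 < nH ^ c := pow_pos h1 c
      omega
  · refine ⟨nH, ψH, hnot, hb, hlt.le, ?_, ?_, hbound hlt⟩
    · intro l hl
      exact (hchar l (lt_trans hl hlt)).mpr (hlow _ hl)
    · intro h' _ hall
      by_contra hc
      push_neg at hc
      have hp : H.P (ψH.φ (List.replicate hb false)) := hall _ (by simpa using hc)
      exact (hhigh hlt) (by simpa using (hchar _ (by simpa using hlt)).mp hp)

end Aux

/-- The class `K'` is closed under substructures: if `G ∈ K'` and `H` is a
substructure of `G` (both satisfying the structural assumptions), then
`H ∈ K'`. -/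
theorem memK'_closed_under_substructures {k : ℕ} {ar : Fin k → ℕ} (c : ℕ)
    (K : (hh : ℕ) → (∀ i : Fin k, (Fin (ar i) → ℕ) → Prop) → Prop)
    (G H : Str k ar) (hG : Good G) (hH : Good H)
    (hsub : IsSubstructure H G) (hmem : MemK' c K G) : MemK' c K H := by
  obtain ⟨e, heroot, heE, heP, heR⟩ := hsub
  obtain ⟨-, -, -, gdeg, gsat⟩ := hG
  rcases hmem with hc1 | hc2
  · -- Condition 1 holds for `G`
    obtain ⟨nG, hG0, ψG, hmax, hneq, hallP, hnoP, hnoR, hK⟩ := hc1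
    obtain ⟨nH, ψH, hnot, hnH1, hnHle, corr, corr2⟩ :=
      sub_setup e heroot heE gdeg ψG hmax
    obtain ⟨satP, -⟩ := gsat nG hmax ψG
    have hG0lt : hG0 < nG := by
      by_contra hcon
      push_neg at hcon
      have h0 : hG0 ^ c = 0 := by omega
      have h1 : 1 ≤ hG0 := le_trans (le_trans hnH1 hnHle) hcon
      have := Nat.one_le_pow c hG0 h1
      omega
    have hlevlow : ∀ d, d < hG0 → G.P (ψG.φ (List.replicate d false)) :=
      fun d hd => hallP _ (by simpa using hd)
    have hlevhigh : ∀ d, hG0 ≤ d → d < nG → ¬ G.P (ψG.φ (List.replicate d false)) :=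
      fun d hd1 hd2 => hnoP _ (by simpa using hd1) (by simpa using hd2)
    have hchar : ∀ l : List Bool, l.length < nH →
        (H.P (ψH.φ l) ↔ G.P (ψG.φ (List.replicate l.length false))) := by
      intro l hl
      obtain ⟨l', hlen, hEq⟩ := corr l hl
      rw [heP, ← hEq]
      exact satP l' (List.replicate l.length false) (by omega)
        (by simp; omega) (by simp [hlen])
    by_cases hEqn : nH = nG
    · left
      refine ⟨nH, hG0, ψH, hnot, by rw [hEqn, hneq], ?_, ?_, ?_, ?_⟩
      · intro l hl
        exact (hchar l (by omega)).mpr (hlevlow _ hl)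
      · intro l h1 h2 hp
        exact hlevhigh _ h1 (by omega) ((hchar l h2).mp hp)
      · intro i t hlt hex hR
        have hR' : G.R i (fun j => e (ψH.φ (t j))) := (heR i _).mp hR
        choose t' hlen' heq' using fun j => corr (t j) (hlt j)
        refine hnoR i t' (fun j => ?_) ?_ ?_
        · rw [hlen' j]
          have := hlt j
          omega
        · obtain ⟨j, hj⟩ := hex
          exact ⟨j, by rw [hlen' j]; exact hj⟩
        · rw [show (fun j => ψG.φ (t' j)) = fun j => e (ψH.φ (t j)) from funext heq']
          exact hR'
      · have hpred : (fun (i : Fin k) (m : Fin (ar i) → ℕ) =>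
              (∀ j, m j < hG0) ∧ ∃ t : Fin (ar i) → List Bool,
              (∀ j, (t j).length = m j) ∧ H.R i fun j => ψH.φ (t j)) =
            (fun (i : Fin k) (m : Fin (ar i) → ℕ) =>
              (∀ j, m j < hG0) ∧ ∃ t : Fin (ar i) → List Bool,
              (∀ j, (t j).length = m j) ∧ G.R i fun j => ψG.φ (t j)) := by
          funext i m
          apply propext
          constructor
          · rintro ⟨hm, t, hlen, hR⟩
            refine ⟨hm, ?_⟩
            choose t' hlen' heq' using fun j =>
              corr (t j) (by rw [hlen j]; have := hm j; omega)
            refine ⟨t', fun j => by rw [hlen' j, hlen j], ?_⟩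
            rw [show (fun j => ψG.φ (t' j)) = fun j => e (ψH.φ (t j)) from funext heq']
            exact (heR i _).mp hR
          · rintro ⟨hm, t, hlen, hR⟩
            refine ⟨hm, ?_⟩
            choose t' hlen' heq' using fun j =>
              corr2 (t j) (by rw [hlen j]; have := hm j; omega)
            refine ⟨t', fun j => by rw [hlen' j, hlen j], ?_⟩
            apply (heR i _).mpr
            rw [show (fun j => e (ψH.φ (t' j))) = fun j => ψG.φ (t j) from funext heq']
            exact hR
        rw [hpred]
        exact hK
    · right
      have hltn : nH < nG := lt_of_le_of_ne hnHle hEqn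
      exact cond2_of c H nH ψH hnot hnH1 hG0
        (fun d => G.P (ψG.φ (List.replicate d false))) hchar hlevlow
        (fun _ => hlevhigh hG0 le_rfl hG0lt) (fun _ => by omega)
  · -- Condition 2 holds for `G`
    obtain ⟨nG, ψG, hmax, hG0, hG0le, hallP, hmaxh, hlt⟩ := hc2
    obtain ⟨nH, ψH, hnot, hnH1, hnHle, corr, corr2⟩ :=
      sub_setup e heroot heE gdeg ψG hmax
    obtain ⟨satP, -⟩ := gsat nG hmax ψG
    have hlevlow : ∀ d, d < hG0 → G.P (ψG.φ (List.replicate d false)) :=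
      fun d hd => hallP _ (by simpa using hd)
    have hchar : ∀ l : List Bool, l.length < nH →
        (H.P (ψH.φ l) ↔ G.P (ψG.φ (List.replicate l.length false))) := by
      intro l hl
      obtain ⟨l', hlen, hEq⟩ := corr l hl
      rw [heP, ← hEq]
      exact satP l' (List.replicate l.length false) (by omega)
        (by simp; omega) (by simp [hlen])
    have hhigh : hG0 < nH → ¬ G.P (ψG.φ (List.replicate hG0 false)) := by
      intro hHlt hP0
      have h1 : hG0 + 1 ≤ nG := by omega
      have hall : AllP ψG (hG0 + 1) := by
        intro l hl
        rcases Nat.lt_or_ge l.length hG0 with h | h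
        · exact hallP l h
        · have hlen : l.length = hG0 := by omega
          exact (satP l (List.replicate hG0 false) (by omega)
            (by simp; omega) (by simp [hlen])).mpr hP0
      have := hmaxh (hG0 + 1) h1 hall
      omega
    right
    exact cond2_of c H nH ψH hnot hnH1 hG0
      (fun d => G.P (ψG.φ (List.replicate d false))) hchar hlevlow hhigh
      (fun _ => lt_of_le_of_lt hnHle hlt)
end
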